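/- Let L be a c-lattice and S a multiplicatively closed subset. If p is an S-prime element of L, then its S-saturation p_S = ⋁{x ∈ L | s·x ≤ p for some s ∈ S} is a prime element of L. -/

import Mathlib

open CompleteLattice

class MulLattice (L : Type*) extends CompleteLattice L, CommMonoid L where
  mul_sSup : ∀ (a : L) (s : Set L), a * sSup s = ⨆ b ∈ s, a * b
  one_eq_top : (1 : L) = ⊤

variable {L : Type*} [MulLattice L]

/-- Residual `(a : b)`. -/
def mres (a b : L) : L := sSup {x : L | x * b ≤ a}

/-- Lattice-theoretic radical. -/
def rad (a : L) : L :=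
  sSup {x : L | IsCompactElement x ∧ ∃ n : ℕ, 0 < n ∧ x ^ n ≤ a}

def IsMeetPrincipal (m : L) : Prop :=
  ∀ a b : L, a ⊓ m * b = m * (mres a m ⊓ b)

def IsJoinPrincipal (m : L) : Prop :=
  ∀ a b : L, a ⊔ mres b m = mres (a * m ⊔ b) m

def IsPrincipal (m : L) : Prop := IsMeetPrincipal m ∧ IsJoinPrincipal m

/-- A multiplicatively closed subset of compact elements with `1 ∈ S`, `0 ∉ S`. -/
def MultClosed (S : Set L) : Prop :=
  (∀ s ∈ S, IsCompactElement s) ∧ (1 : L) ∈ S ∧ (⊥ : L) ∉ S ∧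
    ∀ s ∈ S, ∀ t ∈ S, s * t ∈ S

def SCompact (S : Set L) (a : L) : Prop :=
  ∃ s ∈ S, ∃ b : L, IsCompactElement b ∧ s * a ≤ b ∧ b ≤ a

def SPrime (S : Set L) (p : L) : Prop :=
  p ≠ ⊤ ∧ (∀ t ∈ S, ¬ t ≤ p) ∧
    ∃ s ∈ S, ∀ a b : L, a * b ≤ p → s * a ≤ p ∨ s * b ≤ p

def SPrimary (S : Set L) (q : L) : Prop :=
  q ≠ ⊤ ∧ (∀ t ∈ S, ¬ t ≤ q) ∧
    ∃ s ∈ S, ∀ c d : L, c * d ≤ q → s * c ≤ q ∨ s * d ≤ rad q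

def Ssat (S : Set L) (a : L) : L := sSup {x : L | ∃ s ∈ S, s * x ≤ a}

class RLattice (L : Type*) extends MulLattice L where
  modular : ∀ a b c : L, a ≤ c → a ⊔ (b ⊓ c) = (a ⊔ b) ⊓ c
  principally_generated : ∀ a : L, a = sSup {m : L | IsPrincipal m ∧ m ≤ a}
  compactly_generated : ∀ a : L, a = sSup {c : L | IsCompactElement c ∧ c ≤ a}
  top_compact : IsCompactElement (⊤ : L)

class CLattice (L : Type*) extends MulLattice L where
  compactly_generated : ∀ a : L, a = sSup {c : L | IsCompactElement c ∧ c ≤ a}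
  top_compact : IsCompactElement (⊤ : L)
  compact_mul : ∀ a b : L, IsCompactElement a → IsCompactElement b →
    IsCompactElement (a * b)


lemma mul_mono_right {L : Type*} [MulLattice L] (a : L) {b c : L} (h : b ≤ c) :
    a * b ≤ a * c := by
  have : a * sSup {b, c} = ⨆ x ∈ ({b, c} : Set L), a * x := MulLattice.mul_sSup a {b, c}
  rw [sSup_pair, sup_eq_right.mpr h] at this
  rw [this]
  exact le_biSup _ (by simp)

lemma mul_le_right' {L : Type*} [MulLattice L] (a b : L) : a * b ≤ b := by
  have h : a ≤ (1 : L) := by rw [MulLattice.one_eq_top]; exact le_top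
  calc a * b = b * a := mul_comm _ _
    _ ≤ b * 1 := mul_mono_right b h
    _ = b := mul_one b

lemma compact_le_Ssat {L : Type*} [CLattice L] (S : Set L) (hS : MultClosed S)
    (p : L) {x : L} (hx : IsCompactElement x) (h : x ≤ Ssat S p) :
    ∃ s ∈ S, s * x ≤ p := by
  obtain ⟨F, hF, hxF⟩ := (isCompactElement_iff_exists_le_sSup_of_le_sSup L x).mp hx _ h
  classical
  choose f hf1 hf2 using fun (y : L) (hy : y ∈ {x : L | ∃ s ∈ S, s * x ≤ p}) => hy
  set g : L → L := fun y => if hy : y ∈ {x : L | ∃ s ∈ S, s * x ≤ p} then f y hy else 1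
  have hgS : ∀ y ∈ F, g y ∈ S := by
    intro y hy
    have hy' := hF hy
    simp only [g, dif_pos hy']
    exact hf1 y hy'
  refine ⟨F.prod g, ?_, ?_⟩
  · exact Finset.prod_induction g (· ∈ S) (fun a b ha hb => hS.2.2.2 a ha b hb) hS.2.1 hgS
  · have key : ∀ y ∈ F, F.prod g * y ≤ p := by
      intro y hy
      have hy' := hF hy
      have h1 : g y * y ≤ p := by simp only [g, dif_pos hy']; exact hf2 y hy'
      have : F.prod g = g y * (F.erase y).prod g := (Finset.mul_prod_erase F g hy).symm
      calc F.prod g * y = (F.erase y).prod g * (g y * y) := by rw [this, mul_comm (g y) ((F.erase y).prod g), mul_assoc]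
        _ ≤ g y * y := mul_le_right' _ _
        _ ≤ p := h1
    have hsup : F.prod g * F.sup id ≤ p := by
      rw [Finset.sup_id_eq_sSup, MulLattice.mul_sSup]
      exact iSup₂_le fun y hy => key y hy
    calc F.prod g * x ≤ F.prod g * F.sup id := mul_mono_right _ hxF
      _ ≤ p := hsup

/-- The S-saturation of an S-prime element is prime. -/
theorem stmt18 {L : Type*} [CLattice L] (S : Set L) (hS : MultClosed S)
    (p : L) (hp : SPrime S p) :
    Ssat S p ≠ ⊤ ∧ ∀ a b : L, IsCompactElement a → IsCompactElement b →
      a * b ≤ Ssat S p → a ≤ Ssat S p ∨ b ≤ Ssat S p :=  by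
  obtain ⟨hpne, hnotle, s, hsS, hsp⟩ := hp
  constructor
  · intro htop
    have h : (⊤ : L) ≤ Ssat S p := htop ▸ le_refl _
    obtain ⟨t, htS, htp⟩ := compact_le_Ssat S hS p CLattice.top_compact h
    have : t ≤ p := by
      calc t = t * 1 := (mul_one t).symm
        _ = t * ⊤ := by rw [MulLattice.one_eq_top]
        _ ≤ p := htp
    exact hnotle t htS this
  · intro a b ha hb hab
    obtain ⟨t, htS, htp⟩ := compact_le_Ssat S hS p (CLattice.compact_mul a b ha hb) hab
    have : (t * a) * b ≤ p := by rw [mul_assoc]; exact htp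
    rcases hsp (t * a) b this with h1 | h2
    · left
      refine le_sSup ?_
      exact ⟨s * t, hS.2.2.2 s hsS t htS, by rw [mul_assoc]; rw [← mul_assoc] at h1 ⊢; exact h1⟩
    · right
      exact le_sSup ⟨s, hsS, h2⟩
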